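/- Let X be a Banach space and Y a proper complemented subspace of X via a bounded linear projection P with range Y. Suppose there exists a continuous map g : ℝ × Y → Y such that the equation y' = g(t, y) has no solution on any open interval. Then there exists a continuous map f : X → X such that the autonomous equation x' = f(x) has no solution on any open interval. -/

import Mathlib

open Filter Topology

theorem autonomous_from_complemented_subspace
    {X : Type*} [NormedAddCommGroup X] [NormedSpace ℝ X] [CompleteSpace X]
    (P : X →L[ℝ] X) (hproj : ∀ x, P (P x) = P x)
    (hproper : LinearMap.range (P : X →ₗ[ℝ] X) ≠ (⊤ : Submodule ℝ X))
    (g : ℝ × (LinearMap.range (P : X →ₗ[ℝ] X)) → (LinearMap.range (P : X →ₗ[ℝ] X))) (hg : Continuous g)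
    (hnosol : ¬ ∃ (a b : ℝ) (y : ℝ → LinearMap.range (P : X →ₗ[ℝ] X)), a < b ∧
        ∀ t ∈ Set.Ioo a b, HasDerivAt y (g (t, y t)) t) :
    ∃ f : X → X, Continuous f ∧ ¬ ∃ (a b : ℝ) (x : ℝ → X), a < b ∧
        ∀ t ∈ Set.Ioo a b, HasDerivAt x (f (x t)) t := by
  classical
  obtain ⟨e, he⟩ : ∃ e, e ∉ LinearMap.range (P : X →ₗ[ℝ] X) := by
    by_contra h
    push_neg at h
    exact hproper (by ext x; simpa using h x)
  set e' : X := e - P e with he'def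
  have hPe' : P e' = 0 := by simp [he'def, map_sub, hproj]
  have he' : e' ≠ 0 := by
    intro h
    apply he
    have : e = P e := by rwa [he'def, sub_eq_zero] at h
    exact ⟨e, this.symm⟩
  obtain ⟨ψ, hψn, hψ⟩ := exists_dual_vector ℝ e' (norm_ne_zero_iff.mpr he')
  set Q : X →L[ℝ] X := ContinuousLinearMap.id ℝ X - P with hQdef
  set φ : X →L[ℝ] ℝ := (‖e'‖⁻¹ • ψ).comp Q with hφdef
  have hφe' : φ e' = 1 := by
    have hne : ‖e'‖ ≠ 0 := norm_ne_zero_iff.mpr he'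
    simp only [hφdef, hQdef, ContinuousLinearMap.coe_comp', Function.comp_apply,
      ContinuousLinearMap.sub_apply, ContinuousLinearMap.coe_id', id_eq, hPe', sub_zero,
      ContinuousLinearMap.smul_apply, smul_eq_mul, hψ, RCLike.ofReal_real_eq_id, id_eq]
    field_simp
  have hφY : ∀ w ∈ LinearMap.range (P : X →ₗ[ℝ] X), φ w = 0 := by
    rintro w ⟨u, rfl⟩
    simp [hφdef, hQdef, hproj]
  set L : X →L[ℝ] (LinearMap.range (P : X →ₗ[ℝ] X)) :=
    P.codRestrict (LinearMap.range (P : X →ₗ[ℝ] X)) (fun x => LinearMap.mem_range_self _ x) with hLdef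
  have hLmem : ∀ v : LinearMap.range (P : X →ₗ[ℝ] X), L (v : X) = v := by
    rintro ⟨w, u, rfl⟩
    apply Subtype.ext
    simp [hLdef, hproj]
  have hLe' : L e' = 0 := by
    apply Subtype.ext
    simp [hLdef, hPe']
  set f : X → X := fun x => e' + ↑(g (φ x, L x)) with hfdef
  have hfc : Continuous f :=
    continuous_const.add (continuous_subtype_val.comp
      (hg.comp (φ.continuous.prodMk L.continuous)))
  have hφf : ∀ x, φ (f x) = 1 := by
    intro x
    simp only [hfdef, map_add, hφe']
    rw [hφY _ (g (φ x, L x)).2]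
    ring
  have hLf : ∀ x, L (f x) = g (φ x, L x) := by
    intro x
    simp only [hfdef, map_add, hLe', hLmem, zero_add]
  refine ⟨f, hfc, ?_⟩
  rintro ⟨a, b, x, hab, hx⟩
  -- φ ∘ x - id has zero derivative on Ioo a b
  have hderiv0 : ∀ t ∈ Set.Ioo a b, HasDerivAt (fun t => φ (x t) - t) 0 t := by
    intro t ht
    have h1 : HasDerivAt (fun t => φ (x t)) (φ (f (x t))) t :=
      φ.hasFDerivAt.comp_hasDerivAt t (hx t ht)
    have := h1.sub (hasDerivAt_id t)
    rwa [hφf, sub_self] at this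
  set t₀ : ℝ := (a + b) / 2 with ht₀def
  have ht₀ : t₀ ∈ Set.Ioo a b := ⟨by linarith, by linarith⟩
  set c : ℝ := φ (x t₀) - t₀ with hcdef
  have hconst : ∀ t ∈ Set.Ioo a b, φ (x t) = t + c := by
    intro t ht
    have := (convex_Ioo a b).is_const_of_fderivWithin_eq_zero
      (f := fun t => φ (x t) - t)
      (fun s hs => ((hderiv0 s hs).differentiableAt).differentiableWithinAt)
      (fun s hs => by
        rw [fderivWithin_of_isOpen isOpen_Ioo hs, (hderiv0 s hs).hasFDerivAt.fderiv]
        ext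
        simp) ht ht₀
    have : φ (x t) - t = c := this
    linarith
  have hnosol' : False := by
    apply hnosol
    refine ⟨a + c, b + c, fun s => L (x (s - c)), by linarith, ?_⟩
    intro s hs
    have hsc : s - c ∈ Set.Ioo a b := ⟨by linarith [hs.1], by linarith [hs.2]⟩
    have h1 : HasDerivAt (fun s : ℝ => x (s - c)) (f (x (s - c))) s := by
      have hinner : HasDerivAt (fun s : ℝ => s - c) 1 s := (hasDerivAt_id s).sub_const c
      have := (hx (s - c) hsc).scomp s hinner
      simpa [Function.comp_def] using this
    have h2 : HasDerivAt (fun s : ℝ => L (x (s - c))) (L (f (x (s - c)))) s :=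
      L.hasFDerivAt.comp_hasDerivAt s h1
    have h3 : L (f (x (s - c))) = g (s, L (x (s - c))) := by
      rw [hLf]
      congr 1
      rw [hconst _ hsc]
      ring_nf
    rwa [h3] at h2
  exact hnosol'
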